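/- (Proposition 6) Let L be a finite-dimensional left Leibniz algebra over a field k of characteristic 0. Then L has a faithful representation of dimension at most dim L + 1: there exist a k-vector space M with dim M ≤ dim L + 1 and bilinear maps L × M → M, (a,m) ↦ a·m, and M × L → M, (m,a) ↦ m·a, satisfying a·(b·m) = [a,b]·m + b·(a·m), a·(m·b) = (a·m)·b + m·[a,b], and m·[a,b] = (m·a)·b + a·(m·b) for all a,b ∈ L, m ∈ M, such that the only x ∈ L with x·m = 0 and m·x = 0 for all m ∈ M is x = 0. -/
import Mathlib


/-
Basic notions for (left) Leibniz algebras, given by a bilinear bracket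
`β : M →ₗ[k] M →ₗ[k] M` on a `k`-vector space `M`.
-/

section LeibnizDefs

variable {k : Type*} [Field k] {M : Type*} [AddCommGroup M] [Module k M]

/-- `[A, B]`: the linear span of brackets of elements of two subspaces. -/
def bracketSpan (β : M →ₗ[k] M →ₗ[k] M) (A B : Submodule k M) : Submodule k M :=
  Submodule.span k {z : M | ∃ a ∈ A, ∃ b ∈ B, z = β a b}

/-- Derived series of a subspace `I`: `D^0 = I`, `D^{n+1} = [D^n, D^n]`. -/
def derivedSeriesOf (β : M →ₗ[k] M →ₗ[k] M) (I : Submodule k M) : ℕ → Submodule k M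
  | 0 => I
  | n + 1 => bracketSpan β (derivedSeriesOf β I n) (derivedSeriesOf β I n)

/-- Lower central series of a subspace `I`: `C^0 = I`, `C^{n+1} = [I, C^n]`. -/
def lowerCentralSeriesOf (β : M →ₗ[k] M →ₗ[k] M) (I : Submodule k M) : ℕ → Submodule k M
  | 0 => I
  | n + 1 => bracketSpan β I (lowerCentralSeriesOf β I n)

/-- A two-sided ideal. -/
def LeibnizIdeal (β : M →ₗ[k] M →ₗ[k] M) (I : Submodule k M) : Prop :=
  (∀ x : M, ∀ u ∈ I, β x u ∈ I) ∧ (∀ u ∈ I, ∀ x : M, β u x ∈ I)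

/-- A subspace is solvable if its derived series reaches `0`. -/
def LeibnizSolvable (β : M →ₗ[k] M →ₗ[k] M) (I : Submodule k M) : Prop :=
  ∃ n, derivedSeriesOf β I n = ⊥

/-- A subspace is nilpotent if its lower central series reaches `0`. -/
def LeibnizNilpotent (β : M →ₗ[k] M →ₗ[k] M) (I : Submodule k M) : Prop :=
  ∃ n, lowerCentralSeriesOf β I n = ⊥

/-- A subalgebra: a subspace closed under the bracket. -/
def LeibnizSubalgebra (β : M →ₗ[k] M →ₗ[k] M) (S : Submodule k M) : Prop :=
  ∀ u ∈ S, ∀ v ∈ S, β u v ∈ S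

end LeibnizDefs

universe u v

/-- Every finite-dimensional Leibniz algebra has a faithful representation of dimension
at most `dim L + 1`. -/
theorem stmt_17 {k : Type u} [Field k] [CharZero k] {L : Type v} [AddCommGroup L]
    [Module k L] [FiniteDimensional k L] (β : L →ₗ[k] L →ₗ[k] L)
    (leib : ∀ x y z : L, β x (β y z) = β (β x y) z + β y (β x z)) :
    ∃ (M : Type (max u v)) (_ : AddCommGroup M) (_ : Module k M),
      FiniteDimensional k M ∧ Module.finrank k M ≤ Module.finrank k L + 1 ∧
      ∃ (ρl : L →ₗ[k] M →ₗ[k] M) (ρr : M →ₗ[k] L →ₗ[k] M),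
        (∀ a b : L, ∀ m : M, ρl a (ρl b m) = ρl (β a b) m + ρl b (ρl a m)) ∧
        (∀ a b : L, ∀ m : M, ρl a (ρr m b) = ρr (ρl a m) b + ρr m (β a b)) ∧
        (∀ a b : L, ∀ m : M, ρr m (β a b) = ρr (ρr m a) b + ρl a (ρr m b)) ∧
        (∀ x : L, (∀ m : M, ρl x m = 0 ∧ ρr m x = 0) → x = 0) := by
  refine ⟨L × k, inferInstance, inferInstance, inferInstance, ?_, ?_⟩
  · rw [Module.finrank_prod, Module.finrank_self]
  · refine ⟨LinearMap.mk₂ k (fun a p => ((β a p.1 : L), (0 : k)))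
      (by intro a b p
          simp only [map_add, LinearMap.add_apply, Prod.mk_add_mk, add_zero])
      (by intro c a p
          simp only [map_smul, LinearMap.smul_apply, Prod.smul_mk, smul_zero])
      (by intro a p q
          simp only [Prod.fst_add, map_add, Prod.mk_add_mk, add_zero])
      (by intro c a p
          simp only [Prod.smul_fst, map_smul, Prod.smul_mk, smul_zero]),
      LinearMap.mk₂ k (fun p a => ((p.2 • a : L), (0 : k)))
      (by intro p q a
          simp only [Prod.snd_add, add_smul, Prod.mk_add_mk, add_zero])
      (by intro c p a
          simp only [Prod.smul_snd, smul_eq_mul, mul_smul, Prod.smul_mk, smul_zero, mul_zero])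
      (by intro p a b
          simp only [smul_add, Prod.mk_add_mk, add_zero])
      (by intro c p a
          simp only [Prod.smul_mk, smul_zero, smul_eq_mul, mul_zero, smul_comm c p.2 a]),
      ?_, ?_, ?_, ?_⟩
    · intro a b m
      simp only [LinearMap.mk₂_apply, Prod.mk_add_mk, Prod.mk.injEq, add_zero]
      exact ⟨leib a b m.1, trivial⟩
    · intro a b m
      simp only [LinearMap.mk₂_apply, zero_smul, Prod.mk_add_mk, Prod.mk.injEq, map_smul]
      simp
    · intro a b m
      simp only [LinearMap.mk₂_apply, zero_smul, Prod.mk_add_mk, Prod.mk.injEq, map_smul]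
      simp
    · intro x hx
      have h := (hx ((0 : L), (1 : k))).2
      simpa using congrArg Prod.fst h
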